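/- For a single server of capacity b serving total arrival rate λ ≤ 1, the short-run fairness of FCFS is at least 0.863 times the clairvoyant short-run fairness; that is, for all integers b ≥ 1 and λ ∈ (0,1], P[Pois(λ) ≤ b] / (P[Pois(λ) ≤ b] + Σ_{k>b} P[Pois(λ)=k]·b/k) ≥ f(1,1), where f(1,1) = 2e^{-1}/(2e^{-1} + Σ_{k=2}^∞ e^{-1}/(k!·k)) ≈ 0.863. -/

import Mathlib

open Real

noncomputable def poissonPMF (μ : ℝ) (k : ℕ) : ℝ :=
  Real.exp (-μ) * μ ^ k / (Nat.factorial k)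

/-- `P[Pois(μ) ≤ b]`. -/
noncomputable def poisCDF (μ : ℝ) (b : ℕ) : ℝ :=
  ∑ k ∈ Finset.range (b + 1), poissonPMF μ k

/-- Clairvoyant short-run fairness: `P[Pois(μ) ≤ b] + Σ_{k>b} P[Pois(μ)=k]·b/k`. -/
noncomputable def clairFair (μ : ℝ) (b : ℕ) : ℝ :=
  poisCDF μ b + ∑' k : ℕ, poissonPMF μ (b + 1 + k) * b / (b + 1 + k)

namespace Stmt13Aux


noncomputable def tailS (b : ℕ) : ℝ :=
  ∑' k : ℕ, 1 / ((Nat.factorial (b + 1 + k) : ℝ) * ((b + 1 + k : ℕ) : ℝ))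

noncomputable def headA (b : ℕ) : ℝ :=
  ∑ k ∈ Finset.range (b + 1), 1 / (Nat.factorial k : ℝ)

lemma tail_term_pos (b k : ℕ) :
    (0:ℝ) < 1 / ((Nat.factorial (b + 1 + k) : ℝ) * ((b + 1 + k : ℕ) : ℝ)) := by
  have h1 : (0:ℝ) < (Nat.factorial (b + 1 + k) : ℝ) := by
    exact_mod_cast (Nat.factorial_pos _)
  have h2 : (0:ℝ) < ((b + 1 + k : ℕ) : ℝ) := by positivity
  positivity

lemma tail_term_le (b k : ℕ) :
    1 / ((Nat.factorial (b + 1 + k) : ℝ) * ((b + 1 + k : ℕ) : ℝ))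
      ≤ (1 / ((Nat.factorial (b+1) : ℝ) * ((b+1 : ℕ) : ℝ))) * (1 / ((b:ℝ)+2))^k := by
  have h1 : (0:ℝ) < (Nat.factorial (b+1) : ℝ) := by exact_mod_cast Nat.factorial_pos _
  have h3 : (0:ℝ) < (Nat.factorial (b+1+k) : ℝ) := by exact_mod_cast Nat.factorial_pos _
  have h4 : (0:ℝ) < ((b+1+k:ℕ):ℝ) := by positivity
  have h5 : (0:ℝ) < ((b+1:ℕ):ℝ) := by positivity
  have hb2 : (0:ℝ) < (b:ℝ)+2 := by positivity
  have hfact : (Nat.factorial (b+1) : ℝ) * ((b:ℝ)+2)^k ≤ (Nat.factorial (b+1+k) : ℝ) := by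
    have h := Nat.factorial_mul_pow_le_factorial (m := b+1) (n := k)
    calc (Nat.factorial (b+1) : ℝ) * ((b:ℝ)+2)^k
        = ((Nat.factorial (b+1) * (b+1+1)^k : ℕ) : ℝ) := by push_cast; ring
      _ ≤ _ := by exact_mod_cast h
  have hk : ((b+1:ℕ):ℝ) ≤ ((b+1+k:ℕ):ℝ) := by
    exact_mod_cast Nat.le_add_right (b+1) k
  have key : (Nat.factorial (b+1) : ℝ) * ((b+1:ℕ):ℝ) * ((b:ℝ)+2)^k
      ≤ (Nat.factorial (b+1+k) : ℝ) * ((b+1+k:ℕ):ℝ) := by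
    have := mul_le_mul hfact hk h5.le h3.le
    nlinarith [this]
  calc 1 / ((Nat.factorial (b + 1 + k) : ℝ) * ((b+1+k:ℕ):ℝ))
      ≤ 1 / ((Nat.factorial (b+1) : ℝ) * ((b+1:ℕ):ℝ) * ((b:ℝ)+2)^k) :=
        one_div_le_one_div_of_le (by positivity) key
    _ = (1 / ((Nat.factorial (b+1) : ℝ) * ((b+1:ℕ):ℝ))) * (1 / ((b:ℝ)+2))^k := by
        rw [one_div_pow, div_mul_div_comm, one_mul]

lemma summable_geom_bound (b : ℕ) :
    Summable (fun k : ℕ => (1 / ((Nat.factorial (b+1) : ℝ) * ((b+1:ℕ):ℝ))) * (1 / ((b:ℝ)+2))^k) := by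
  apply Summable.mul_left
  apply summable_geometric_of_lt_one (by positivity)
  rw [div_lt_one (by positivity)]
  linarith

lemma tailS_summable (b : ℕ) :
    Summable (fun k : ℕ => 1 / ((Nat.factorial (b + 1 + k) : ℝ) * ((b + 1 + k : ℕ) : ℝ))) :=
  Summable.of_nonneg_of_le (fun k => (tail_term_pos b k).le) (fun k => tail_term_le b k)
    (summable_geom_bound b)

lemma tailS_nonneg (b : ℕ) : 0 ≤ tailS b :=
  tsum_nonneg fun k => (tail_term_pos b k).le

lemma tailS_le (b : ℕ) :
    tailS b ≤ (1 / ((Nat.factorial (b+1) : ℝ) * ((b+1:ℕ):ℝ))) * (((b:ℝ)+2)/((b:ℝ)+1)) := by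
  have hgeo : ∑' k : ℕ, (1 / ((b:ℝ)+2))^k = ((b:ℝ)+2)/((b:ℝ)+1) := by
    rw [tsum_geometric_of_lt_one (by positivity) (by rw [div_lt_one (by positivity)]; linarith)]
    rw [show (1:ℝ) - 1/((b:ℝ)+2) = ((b:ℝ)+1)/((b:ℝ)+2) from by field_simp; ring, inv_div]
  calc tailS b ≤ ∑' k : ℕ, (1 / ((Nat.factorial (b+1) : ℝ) * ((b+1:ℕ):ℝ))) * (1 / ((b:ℝ)+2))^k :=
        Summable.tsum_le_tsum (fun k => tail_term_le b k) (tailS_summable b) (summable_geom_bound b)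
    _ = (1 / ((Nat.factorial (b+1) : ℝ) * ((b+1:ℕ):ℝ))) * (((b:ℝ)+2)/((b:ℝ)+1)) := by
        rw [tsum_mul_left, hgeo]

lemma tailS_one_ge : (1:ℝ)/4 ≤ tailS 1 := by
  have h := Summable.le_tsum (tailS_summable 1) 0 (fun k _ => (tail_term_pos 1 k).le)
  calc (1:ℝ)/4 = 1 / ((Nat.factorial (1+1+0) : ℝ) * ((1+1+0:ℕ):ℝ)) := by
        norm_num [Nat.factorial]
    _ ≤ tailS 1 := h

lemma headA_ge_two (b : ℕ) (hb : 1 ≤ b) : 2 ≤ headA b := by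
  unfold headA
  have hsub : Finset.range 2 ⊆ Finset.range (b+1) := by
    apply Finset.range_subset_range.mpr; omega
  calc (2:ℝ) = ∑ k ∈ Finset.range 2, 1 / (Nat.factorial k : ℝ) := by
        rw [Finset.sum_range_succ, Finset.sum_range_one]
        norm_num [Nat.factorial]
    _ ≤ _ := Finset.sum_le_sum_of_subset_of_nonneg hsub (fun k _ _ => by positivity)

lemma headA_one : headA 1 = 2 := by
  unfold headA
  rw [Finset.sum_range_succ, Finset.sum_range_one]
  norm_num [Nat.factorial]

lemma key_ineq (b : ℕ) (hb : 1 ≤ b) : 2 * (b:ℝ) * tailS b ≤ tailS 1 * headA b := by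
  rcases eq_or_lt_of_le hb with h1 | h2
  · subst h1
    rw [headA_one]
    norm_num
    linarith [tailS_nonneg 1]
  · have hb2 : 2 ≤ b := h2
    have hbR : (2:ℝ) ≤ (b:ℝ) := by exact_mod_cast hb2
    have hf6 : (6:ℝ) ≤ (Nat.factorial (b+1) : ℝ) := by
      have : Nat.factorial 3 ≤ Nat.factorial (b+1) := Nat.factorial_le (by omega)
      calc (6:ℝ) = ((Nat.factorial 3 : ℕ) : ℝ) := by norm_num [Nat.factorial]
        _ ≤ _ := by exact_mod_cast this
    have hfpos : (0:ℝ) < (Nat.factorial (b+1) : ℝ) := by exact_mod_cast Nat.factorial_pos _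
    have hcast : ((b+1:ℕ):ℝ) = (b:ℝ)+1 := by push_cast; ring
    have step1 : 2 * (b:ℝ) * tailS b ≤ 2 / (Nat.factorial (b+1) : ℝ) := by
      have h' : 2 * (b:ℝ) * tailS b
          ≤ 2 * (b:ℝ) * ((1 / ((Nat.factorial (b+1) : ℝ) * ((b:ℝ)+1))) * (((b:ℝ)+2)/((b:ℝ)+1))) := by
        have := tailS_le b
        rw [hcast] at this
        apply mul_le_mul_of_nonneg_left this (by positivity)
      calc 2 * (b:ℝ) * tailS b
          ≤ 2 * (b:ℝ) * ((1 / ((Nat.factorial (b+1) : ℝ) * ((b:ℝ)+1))) * (((b:ℝ)+2)/((b:ℝ)+1))) := h'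
        _ = (2 / (Nat.factorial (b+1) : ℝ)) * (((b:ℝ)*((b:ℝ)+2))/(((b:ℝ)+1)^2)) := by
            field_simp
        _ ≤ (2 / (Nat.factorial (b+1) : ℝ)) * 1 := by
            apply mul_le_mul_of_nonneg_left _ (by positivity)
            rw [div_le_one (by positivity)]
            nlinarith
        _ = 2 / (Nat.factorial (b+1) : ℝ) := by ring
    have step2 : (2:ℝ) / (Nat.factorial (b+1) : ℝ) ≤ 1/2 := by
      rw [div_le_div_iff₀ hfpos (by norm_num)]
      linarith
    have step3 : (1:ℝ)/2 ≤ tailS 1 * headA b := by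
      calc (1:ℝ)/2 = (1/4) * 2 := by norm_num
        _ ≤ tailS 1 * headA b :=
            mul_le_mul tailS_one_ge (headA_ge_two b hb) (by norm_num)
              (le_trans (by norm_num) tailS_one_ge)
    linarith

end Stmt13Aux

open Stmt13Aux in
theorem stmt_13 (b : ℕ) (hb : 1 ≤ b) (lam : ℝ) (hlam0 : 0 < lam) (hlam1 : lam ≤ 1) :
    poisCDF lam b / clairFair lam b
      ≥ (2 * Real.exp (-1)) /
          (2 * Real.exp (-1) + ∑' k : ℕ, Real.exp (-1) / (Nat.factorial (k + 2) * (k + 2))) := by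
  set E := Real.exp (-lam) with hE
  have hEpos : 0 < E := Real.exp_pos _
  -- rewrite RHS as 2/(2 + tailS 1)
  have hsum1 : (∑' k : ℕ, Real.exp (-1) / (Nat.factorial (k + 2) * (k + 2)))
      = Real.exp (-1) * tailS 1 := by
    unfold tailS
    rw [← tsum_mul_left]
    apply tsum_congr
    intro k
    rw [show 1+1+k = k+2 from by omega]
    push_cast
    ring
  rw [hsum1, show 2 * Real.exp (-1) + Real.exp (-1) * tailS 1
      = Real.exp (-1) * (2 + tailS 1) from by ring,
    show 2 * Real.exp (-1) = Real.exp (-1) * 2 from by ring,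
    mul_div_mul_left _ _ (Real.exp_ne_zero _)]
  -- bounds
  set T := ∑' k : ℕ, poissonPMF lam (b + 1 + k) * (b:ℝ) / (b + 1 + k) with hT
  have hterm_eq : ∀ k : ℕ, poissonPMF lam (b + 1 + k) * (b:ℝ) / (b + 1 + k)
      = (E * (b:ℝ) / ((Nat.factorial (b+1+k) : ℝ) * ((b+1+k:ℕ):ℝ))) * lam ^ (b+1+k) := by
    intro k
    unfold poissonPMF
    have h3 : ((Nat.factorial (b+1+k) : ℝ)) ≠ 0 := by
      exact_mod_cast (Nat.factorial_pos _).ne'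
    have h4 : ((b:ℝ)+1+(k:ℝ)) ≠ 0 := by positivity
    push_cast
    field_simp
    ring
  have hterm_nonneg : ∀ k : ℕ, 0 ≤ poissonPMF lam (b + 1 + k) * (b:ℝ) / (b + 1 + k) := by
    intro k
    rw [hterm_eq k]
    have h3 : (0:ℝ) < (Nat.factorial (b+1+k) : ℝ) := by exact_mod_cast Nat.factorial_pos _
    have h4 : (0:ℝ) < ((b+1+k:ℕ):ℝ) := by positivity
    positivity
  have hterm_le : ∀ k : ℕ, poissonPMF lam (b + 1 + k) * (b:ℝ) / (b + 1 + k)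
      ≤ (E * lam ^ b * (b:ℝ)) * (1 / ((Nat.factorial (b+1+k) : ℝ) * ((b+1+k:ℕ):ℝ))) := by
    intro k
    rw [hterm_eq k]
    have h3 : (0:ℝ) < (Nat.factorial (b+1+k) : ℝ) := by exact_mod_cast Nat.factorial_pos _
    have h4 : (0:ℝ) < ((b+1+k:ℕ):ℝ) := by positivity
    have hpow : lam ^ (b+1+k) ≤ lam ^ b :=
      pow_le_pow_of_le_one hlam0.le hlam1 (by omega)
    calc (E * (b:ℝ) / ((Nat.factorial (b+1+k) : ℝ) * ((b+1+k:ℕ):ℝ))) * lam ^ (b+1+k)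
        ≤ (E * (b:ℝ) / ((Nat.factorial (b+1+k) : ℝ) * ((b+1+k:ℕ):ℝ))) * lam ^ b :=
          mul_le_mul_of_nonneg_left hpow (by positivity)
      _ = (E * lam ^ b * (b:ℝ)) * (1 / ((Nat.factorial (b+1+k) : ℝ) * ((b+1+k:ℕ):ℝ))) := by
          ring
  have hTsummable : Summable (fun k : ℕ => poissonPMF lam (b + 1 + k) * (b:ℝ) / (b + 1 + k)) :=
    Summable.of_nonneg_of_le hterm_nonneg hterm_le ((tailS_summable b).mul_left _)
  have hT_le : T ≤ (E * lam ^ b * (b:ℝ)) * tailS b := by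
    rw [hT]
    calc (∑' k : ℕ, poissonPMF lam (b + 1 + k) * (b:ℝ) / (b + 1 + k))
        ≤ ∑' k : ℕ, (E * lam ^ b * (b:ℝ)) * (1 / ((Nat.factorial (b+1+k) : ℝ) * ((b+1+k:ℕ):ℝ))) :=
          Summable.tsum_le_tsum hterm_le hTsummable ((tailS_summable b).mul_left _)
      _ = (E * lam ^ b * (b:ℝ)) * tailS b := by rw [tsum_mul_left]; rfl
  have hT_nonneg : 0 ≤ T := tsum_nonneg hterm_nonneg
  have hC_ge : E * lam ^ b * headA b ≤ poisCDF lam b := by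
    unfold poisCDF headA
    rw [Finset.mul_sum]
    apply Finset.sum_le_sum
    intro k hk
    have hkb : k ≤ b := by
      simp only [Finset.mem_range] at hk; omega
    unfold poissonPMF
    have hfk : (0:ℝ) < (Nat.factorial k : ℝ) := by exact_mod_cast Nat.factorial_pos _
    have hpow : lam ^ b ≤ lam ^ k := pow_le_pow_of_le_one hlam0.le hlam1 hkb
    rw [show E * lam ^ b * (1 / (Nat.factorial k : ℝ)) = lam ^ b * (E / (Nat.factorial k : ℝ))
      from by ring, show E * lam ^ k / (Nat.factorial k : ℝ) = lam ^ k * (E / (Nat.factorial k : ℝ))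
      from by ring]
    exact mul_le_mul_of_nonneg_right hpow (by positivity)
  have hC_pos : 0 < poisCDF lam b := by
    unfold poisCDF
    apply Finset.sum_pos'
    · intro k _
      unfold poissonPMF
      have hfk : (0:ℝ) < (Nat.factorial k : ℝ) := by exact_mod_cast Nat.factorial_pos _
      positivity
    · refine ⟨0, Finset.mem_range.mpr (by omega), ?_⟩
      unfold poissonPMF
      simp [hEpos.le]
      positivity
  have hCF : clairFair lam b = poisCDF lam b + T := rfl
  rw [ge_iff_le, hCF, div_le_div_iff₀ (by linarith [tailS_nonneg 1]) (by linarith)]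
  -- goal: 2 * (C + T) ≤ C * (2 + tailS 1), i.e. 2T ≤ C * tailS 1
  have hm1 : (E * lam ^ b) * (2 * (b:ℝ) * tailS b) ≤ (E * lam ^ b) * (tailS 1 * headA b) :=
    mul_le_mul_of_nonneg_left (key_ineq b hb) (by positivity)
  have hm2 : tailS 1 * (E * lam ^ b * headA b) ≤ tailS 1 * poisCDF lam b :=
    mul_le_mul_of_nonneg_left hC_ge (tailS_nonneg 1)
  have e1 : (E * lam ^ b) * (2 * (b:ℝ) * tailS b) = 2 * ((E * lam ^ b * (b:ℝ)) * tailS b) := by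
    ring
  have e2 : (E * lam ^ b) * (tailS 1 * headA b) = tailS 1 * (E * lam ^ b * headA b) := by
    ring
  nlinarith [hT_le, hm1, hm2, e1, e2]
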